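/- arXiv:2205.09718 — 2 statements merged into one kernel-verified Lean document; each statement's English description precedes it below -/
import Mathlib

section
/- For a metric pair (X,A), the pseudometric space D_∞(X,A) with the bottleneck distance is a metric space if and only if X \ A with the restricted metric is a discrete space. -/
open scoped ENNReal
open Filter Metric Set

/-- The bottleneck (pre)distance between two `ℕ`-indexed representatives of persistence
diagrams on the metric pair `(X, A)`: the infimum, over countable multisets `α`, `β` of points
of `A` adjoined to `f` and `g` respectively and over bijections between the resulting
multisets, of the supremum displacement. -/
noncomputable def bdist {X : Type*} [MetricSpace X] (A : Set X) (f g : ℕ → X) : ℝ≥0∞ :=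
  ⨅ (α : ℕ → X) (_ : ∀ n, α n ∈ A) (β : ℕ → X) (_ : ∀ n, β n ∈ A)
    (e : (ℕ ⊕ ℕ) ≃ (ℕ ⊕ ℕ)), ⨆ n : ℕ ⊕ ℕ, edist (Sum.elim f α n) (Sum.elim g β (e n))

/-- Two representatives define the same persistence diagram on `(X, A)` iff their restrictions
away from `A` agree as multisets, i.e. there is a value-preserving bijection between the index
sets of points outside `A`. -/
def DiagEquiv {X : Type*} [MetricSpace X] (A : Set X) (f g : ℕ → X) : Prop :=
  ∃ e : {n : ℕ // f n ∉ A} ≃ {n : ℕ // g n ∉ A}, ∀ p, g (e p).1 = f p.1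

/-- A representative belongs to `D_∞(X, A)` iff it is at finite bottleneck distance from the
empty diagram (represented by any multiset of points of `A`). -/
def IsDiagram {X : Type*} [MetricSpace X] (A : Set X) (f : ℕ → X) : Prop :=
  ∃ g : ℕ → X, (∀ n, g n ∈ A) ∧ bdist A f g ≠ ⊤

/-- The quotient metric of `X/A`, read on representatives in `X`:
`d_{X/A}(x,y) = min (d(x,y)) (d(x,A) + d(y,A))`. -/
noncomputable def qdist {X : Type*} [MetricSpace X] (A : Set X) (x y : X) : ℝ :=
  min (dist x y) (Metric.infDist x A + Metric.infDist y A)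

-- Lemma A
lemma discA {X : Type*} [MetricSpace X] (s : Set X) :
    DiscreteTopology s ↔ ∀ x ∈ s, ∃ ε > 0, ∀ y ∈ s, dist y x < ε → y = x := by
  rw [discreteTopology_subtype_iff]
  refine forall₂_congr fun x hx => ?_
  rw [← nhdsWithin_inter', (nhdsWithin_basis_ball).eq_bot_iff]
  constructor
  · rintro ⟨ε, hε, h⟩
    refine ⟨ε, hε, fun y hy hdy => by_contra fun hne => ?_⟩
    exact (eq_empty_iff_forall_notMem.1 h y) ⟨mem_ball.2 hdy, hne, hy⟩
  · rintro ⟨ε, hε, h⟩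
    refine ⟨ε, hε, eq_empty_iff_forall_notMem.2 ?_⟩
    rintro y ⟨hb, hne, hy⟩
    exact hne (h y hy (mem_ball.1 hb))

lemma bdist_le {X : Type*} [MetricSpace X] {A : Set X} {f g α β : ℕ → X}
    (hα : ∀ n, α n ∈ A) (hβ : ∀ n, β n ∈ A) (e : (ℕ ⊕ ℕ) ≃ (ℕ ⊕ ℕ)) :
    bdist A f g ≤ ⨆ n : ℕ ⊕ ℕ, edist (Sum.elim f α n) (Sum.elim g β (e n)) :=
  iInf_le_of_le α (iInf_le_of_le hα (iInf_le_of_le β (iInf_le_of_le hβ (iInf_le _ e))))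

lemma bdist_lt {X : Type*} [MetricSpace X] {A : Set X} {f g : ℕ → X} {c : ℝ≥0∞}
    (h : bdist A f g < c) :
    ∃ α, (∀ n, α n ∈ A) ∧ ∃ β, (∀ n, β n ∈ A) ∧ ∃ e : (ℕ ⊕ ℕ) ≃ (ℕ ⊕ ℕ),
      ∀ n, edist (Sum.elim f α n) (Sum.elim g β (e n)) < c := by
  simp only [bdist, iInf_lt_iff] at h
  obtain ⟨α, hα, β, hβ, e, he⟩ := h
  exact ⟨α, hα, β, hβ, e, fun n => (le_iSup _ n).trans_lt he⟩

def cyc (N : ℕ) : ℕ ≃ ℕ where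
  toFun k := if k < N then k + 1 else if k = N then 0 else k
  invFun m := if m = 0 then N else if m ≤ N then m - 1 else m
  left_inv k := by
    dsimp only
    by_cases h1 : k < N
    · rw [if_pos h1, if_neg (by omega), if_pos (by omega)]; omega
    · rw [if_neg h1]
      by_cases h2 : k = N
      · rw [if_pos h2, if_pos rfl]; omega
      · rw [if_neg h2, if_neg (by omega), if_neg (by omega)]
  right_inv m := by
    dsimp only
    by_cases h1 : m = 0
    · rw [if_pos h1, if_neg (by omega), if_pos rfl]; omega
    · by_cases h2 : m ≤ N
      · rw [if_neg h1, if_pos h2, if_pos (by omega)]; omega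
      · rw [if_neg h1, if_neg h2, if_neg (by omega), if_neg (by omega)]

lemma isDiagram_of_bounded {X : Type*} [MetricSpace X] {A : Set X} {f : ℕ → X}
    (a : X) (ha : a ∈ A) (C : ℝ) (hC : ∀ n, dist (f n) a ≤ C) : IsDiagram A f := by
  refine ⟨fun _ => a, fun _ => ha, ?_⟩
  have hle : bdist A f (fun _ => a) ≤ ENNReal.ofReal C := by
    refine (bdist_le (α := fun _ => a) (β := fun _ => a) (fun _ => ha) (fun _ => ha)
      (Equiv.refl _)).trans (iSup_le ?_)
    rintro (k | j)
    · simp only [Equiv.refl_apply, Sum.elim_inl]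
      rw [edist_dist]
      exact ENNReal.ofReal_le_ofReal (hC k)
    · simp
  exact ne_top_of_le_ne_top ENNReal.ofReal_ne_top hle

lemma fiberKey {X : Type*} [MetricSpace X] {A : Set X} {f g α β : ℕ → X}
    (hβ : ∀ n, β n ∈ A) {x : X} {ε : ℝ}
    (hεA : ε ≤ Metric.infDist x A)
    (hball : ∀ y, y ∉ A → dist y x < ε → y = x)
    (e : (ℕ ⊕ ℕ) ≃ (ℕ ⊕ ℕ))
    (he : ∀ n, edist (Sum.elim f α n) (Sum.elim g β (e n)) < ENNReal.ofReal ε) :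
    ∀ n, f n = x → ∃ m, e (Sum.inl n) = Sum.inl m ∧ g m = x := by
  intro n hn
  have h1 := he (Sum.inl n)
  rw [Sum.elim_inl, hn] at h1
  rcases hc : e (Sum.inl n) with m | k <;> rw [hc] at h1
  · rw [Sum.elim_inl] at h1
    rw [edist_dist] at h1
    have hd : dist (g m) x < ε := by
      rw [dist_comm]
      exact (ENNReal.ofReal_lt_ofReal_iff_of_nonneg dist_nonneg).1 h1
    have hmA : g m ∉ A := by
      intro hm
      have := Metric.infDist_le_dist_of_mem (x := x) hm
      rw [dist_comm] at hd
      linarith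
    exact ⟨m, rfl, hball _ hmA hd⟩
  · exfalso
    rw [Sum.elim_inr, edist_dist] at h1
    have hd : dist x (β k) < ε := (ENNReal.ofReal_lt_ofReal_iff_of_nonneg dist_nonneg).1 h1
    have := Metric.infDist_le_dist_of_mem (x := x) (hβ k)
    linarith

lemma reverse_dir {X : Type*} [MetricSpace X] {A : Set X} (hA : A.Nonempty)
    (hAcl : IsClosed A) (hD : DiscreteTopology (Aᶜ : Set X))
    (f g : ℕ → X) (hb : bdist A f g = 0) : DiagEquiv A f g := by
  classical
  set F : {n : ℕ // f n ∉ A} → X := fun p => f p.1 with hF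
  set G : {n : ℕ // g n ∉ A} → X := fun p => g p.1 with hG
  have hfib : ∀ x : X, Nonempty ({p // F p = x} ≃ {q // G q = x}) := by
    intro x
    by_cases hx : x ∈ A
    · have h1 : IsEmpty {p // F p = x} := ⟨fun p => p.1.2 (by rw [show f p.1.1 = x from p.2]; exact hx)⟩
      have h2 : IsEmpty {q // G q = x} := ⟨fun q => q.1.2 (by rw [show g q.1.1 = x from q.2]; exact hx)⟩
      exact ⟨Equiv.equivOfIsEmpty _ _⟩
    · obtain ⟨r, hr, hrball⟩ := (discA (Aᶜ)).1 hD x hx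
      have hpos : 0 < Metric.infDist x A := by
        rwa [← hAcl.notMem_iff_infDist_pos hA]
      set ε := min r (Metric.infDist x A) with hε
      have hε0 : 0 < ε := lt_min hr hpos
      have hεA : ε ≤ Metric.infDist x A := min_le_right _ _
      have hball : ∀ y, y ∉ A → dist y x < ε → y = x := fun y hy hd =>
        hrball y hy (hd.trans_le (min_le_left _ _))
      have hlt : bdist A f g < ENNReal.ofReal ε := by
        rw [hb]; exact ENNReal.ofReal_pos.2 hε0
      obtain ⟨α, hα, β, hβ, e, he⟩ := bdist_lt hlt
      have key1 := fiberKey hβ hεA hball e he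
      have he' : ∀ n, edist (Sum.elim g β n) (Sum.elim f α (e.symm n)) < ENNReal.ofReal ε := by
        intro n
        rw [edist_comm]
        have := he (e.symm n)
        rwa [Equiv.apply_symm_apply] at this
      have key2 := fiberKey hα hεA hball e.symm he'
      choose m1 hm1 hm2 using key1
      choose n1 hn1 hn2 using key2
      have emb1 : {p // F p = x} ↪ {q // G q = x} := by
        refine ⟨fun p => ⟨⟨m1 p.1.1 p.2, fun hmem => hx (hm2 p.1.1 p.2 ▸ hmem)⟩, hm2 p.1.1 p.2⟩, ?_⟩
        intro p q h
        have hmm : m1 p.1.1 p.2 = m1 q.1.1 q.2 := congrArg (fun t => t.1.1) h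
        have : e (Sum.inl p.1.1) = e (Sum.inl q.1.1) := by
          rw [hm1 p.1.1 p.2, hm1 q.1.1 q.2, hmm]
        have := Sum.inl_injective (e.injective this)
        exact Subtype.ext (Subtype.ext this)
      have emb2 : {q // G q = x} ↪ {p // F p = x} := by
        refine ⟨fun q => ⟨⟨n1 q.1.1 q.2, fun hmem => hx (hn2 q.1.1 q.2 ▸ hmem)⟩, hn2 q.1.1 q.2⟩, ?_⟩
        intro p q h
        have hmm : n1 p.1.1 p.2 = n1 q.1.1 q.2 := congrArg (fun t => t.1.1) h
        have : e.symm (Sum.inl p.1.1) = e.symm (Sum.inl q.1.1) := by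
          rw [hn1 p.1.1 p.2, hn1 q.1.1 q.2, hmm]
        have := Sum.inl_injective (e.symm.injective this)
        exact Subtype.ext (Subtype.ext this)
      exact Function.Embedding.antisymm emb1 emb2
  have h : ∀ x : X, {p // F p = x} ≃ {q // G q = x} := fun x => (hfib x).some
  refine ⟨(Equiv.sigmaFiberEquiv F).symm.trans
    ((Equiv.sigmaCongrRight h).trans (Equiv.sigmaFiberEquiv G)), fun p => ?_⟩
  show G (((Equiv.sigmaFiberEquiv F).symm.trans
    ((Equiv.sigmaCongrRight h).trans (Equiv.sigmaFiberEquiv G))) p) = F p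
  exact (h (F p) ⟨p, rfl⟩).2

/-- `D_∞(X,A)` is a metric space (distinct diagrams are at positive bottleneck distance)
if and only if `X \ A` is discrete. -/
theorem stmt_2 {X : Type*} [MetricSpace X] (A : Set X) (hA : A.Nonempty)
    (hAcl : IsClosed A) :
    (∀ f g : ℕ → X, IsDiagram A f → IsDiagram A g → bdist A f g = 0 → DiagEquiv A f g)
      ↔ DiscreteTopology (Aᶜ : Set X) := by
  constructor
  · intro H
    by_contra hD
    rw [discA] at hD
    push_neg at hD
    obtain ⟨x, hx, h2⟩ := hD
    have hseq : ∀ k : ℕ, ∃ y, y ∈ (Aᶜ : Set X) ∧ dist y x < 1 / ((k : ℝ) + 1) ∧ y ≠ x := by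
      intro k
      obtain ⟨y, hy1, hy2, hy3⟩ := h2 (1 / ((k : ℝ) + 1)) (by positivity)
      exact ⟨y, hy1, hy2, hy3⟩
    choose z hz1 hz2 hz3 using hseq
    obtain ⟨a, ha⟩ := hA
    set f : ℕ → X := z with hf
    set g : ℕ → X := fun n => Nat.casesOn n x z with hg
    have hzb : ∀ k, dist (z k) x ≤ 1 := by
      intro k
      have := hz2 k
      have h1 : 1 / ((k : ℝ) + 1) ≤ 1 := by
        rw [div_le_one (by positivity)]; linarith [Nat.cast_nonneg (α := ℝ) k]
      linarith
    have hdf : IsDiagram A f := by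
      refine isDiagram_of_bounded a ha (1 + dist x a) fun n => ?_
      calc dist (f n) a ≤ dist (f n) x + dist x a := dist_triangle _ _ _
        _ ≤ 1 + dist x a := by linarith [hzb n]
    have hdg : IsDiagram A g := by
      refine isDiagram_of_bounded a ha (1 + dist x a) fun n => ?_
      rcases n with _ | m
      · show dist x a ≤ 1 + dist x a; linarith [dist_nonneg (x := x) (y := a)]
      · show dist (z m) a ≤ 1 + dist x a
        calc dist (z m) a ≤ dist (z m) x + dist x a := dist_triangle _ _ _
          _ ≤ 1 + dist x a := by linarith [hzb m]
    have hkey : ∀ N : ℕ, bdist A f g ≤ ENNReal.ofReal (2 / ((N : ℝ) + 1)) := by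
      intro N
      refine (bdist_le (α := fun _ => a) (β := fun _ => a) (fun _ => ha) (fun _ => ha)
        (Equiv.sumCongr (cyc N) (Equiv.refl ℕ))).trans (iSup_le ?_)
      rintro (k | j)
      · simp only [Equiv.sumCongr_apply, Sum.map_inl, Sum.elim_inl]
        show edist (z k) (g (cyc N k)) ≤ _
        by_cases h1 : k < N
        · have : cyc N k = k + 1 := by simp [cyc, h1]
          rw [this]
          show edist (z k) (z k) ≤ _
          simp
        · by_cases h2 : k = N
          · have : cyc N k = 0 := by simp [cyc, h1, h2]
            rw [this]
            show edist (z k) x ≤ _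
            rw [edist_dist]
            refine ENNReal.ofReal_le_ofReal ?_
            have := hz2 k
            have hle : 1 / ((k : ℝ) + 1) ≤ 2 / ((N : ℝ) + 1) := by
              subst h2
              rw [div_le_div_iff₀ (by positivity) (by positivity)]
              nlinarith [Nat.cast_nonneg (α := ℝ) k]
            linarith
          · have hkN : N < k := by omega
            obtain ⟨m, rfl⟩ : ∃ m, k = m + 1 := ⟨k - 1, by omega⟩
            have : cyc N (m + 1) = m + 1 := by
              simp only [cyc, Equiv.coe_fn_mk]
              rw [if_neg h1, if_neg h2]
            rw [this]
            show edist (z (m + 1)) (z m) ≤ _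
            rw [edist_dist]
            refine ENNReal.ofReal_le_ofReal ?_
            have hmN : N ≤ m := by omega
            have hmNr : (N : ℝ) ≤ m := by exact_mod_cast hmN
            have h3 := hz2 (m + 1)
            have h4 := hz2 m
            push_cast at h3
            have h5 : 1 / ((m : ℝ) + 1 + 1) ≤ 1 / ((N : ℝ) + 1) := by gcongr <;> linarith
            have h6 : 1 / ((m : ℝ) + 1) ≤ 1 / ((N : ℝ) + 1) := by gcongr <;> linarith
            have h7 : dist (z (m + 1)) (z m) ≤ dist (z (m + 1)) x + dist x (z m) :=
              dist_triangle _ _ _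
            rw [dist_comm x (z m)] at h7
            have : 2 / ((N : ℝ) + 1) = 1 / ((N : ℝ) + 1) + 1 / ((N : ℝ) + 1) := by ring
            rw [this]
            linarith
      · simp
    have hb0 : bdist A f g = 0 := by
      refine le_antisymm (ENNReal.le_of_forall_pos_le_add fun ε hε _ => ?_) zero_le
      obtain ⟨N, hN⟩ := exists_nat_one_div_lt (ε := (ε : ℝ) / 2) (by positivity)
      refine (hkey N).trans ?_
      rw [zero_add]
      have h8 : 2 / ((N : ℝ) + 1) ≤ ε := by
        rw [div_le_iff₀ (by positivity)]
        rw [div_lt_iff₀ (by positivity)] at hN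
        push_cast at hN ⊢
        linarith
      calc ENNReal.ofReal (2 / ((N : ℝ) + 1)) ≤ ENNReal.ofReal (ε : ℝ) :=
            ENNReal.ofReal_le_ofReal h8
        _ = (ε : ℝ≥0∞) := ENNReal.ofReal_coe_nnreal
    obtain ⟨E, hE⟩ := H f g hdf hdg hb0
    have hq : (x : X) ∉ A := hx
    set q : {n : ℕ // g n ∉ A} := ⟨0, hq⟩ with hqdef
    have := hE (E.symm q)
    rw [Equiv.apply_symm_apply] at this
    exact hz3 (E.symm q).1 this.symm
  · intro hD f g _ _ hb
    exact reverse_dir hA hAcl hD f g hb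
end

section
/- Let (X,A) be a metric pair such that for all D > δ > 0 the set B_D(A) \ B_δ(A) is totally bounded, where B_r(A) is the open r-neighborhood of A in X. Then the pseudometric space D_∞(X,A) with the bottleneck distance is separable. -/
open scoped ENNReal
open Filter Metric Set

section Aux

lemma equiv_of_encard_eq' {s t : Set ℕ} (h : s.encard = t.encard) : Nonempty (s ≃ t) := by
  classical
  by_cases hs : s.Finite
  · have ht : t.Finite := by
      rw [← Set.encard_ne_top_iff] at hs ⊢
      rwa [← h]
    haveI := hs.fintype
    haveI := ht.fintype
    rw [s.encard_eq_coe_toFinset_card, t.encard_eq_coe_toFinset_card] at h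
    have hcard : s.toFinset.card = t.toFinset.card := by exact_mod_cast h
    rw [Set.toFinset_card, Set.toFinset_card] at hcard
    exact ⟨Fintype.equivOfCardEq hcard⟩
  · have ht : t.Infinite := Set.encard_eq_top_iff.1 (by rw [← h]; exact Set.encard_eq_top_iff.2 hs)
    haveI : Infinite s := Set.infinite_coe_iff.2 hs
    haveI : Infinite t := Set.infinite_coe_iff.2 ht
    letI := (nonempty_denumerable ↥s).some
    letI := (nonempty_denumerable ↥t).some
    exact ⟨(Denumerable.eqv _).trans (Denumerable.eqv _).symm⟩

lemma encard_cast_lt' (c : ℕ∞) : {j : ℕ | (j : ℕ∞) < c}.encard = c := by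
  cases c with
  | top =>
    have h1 : {j : ℕ | (j : ℕ∞) < ⊤} = Set.univ := by
      ext j; simp [WithTop.coe_lt_top]
    rw [h1]
    exact Set.encard_eq_top_iff.2 Set.infinite_univ
  | coe cn =>
    have h1 : {j : ℕ | (j : ℕ∞) < (cn : ℕ∞)} = Set.Iio cn := by
      ext j; simp [Set.mem_Iio, Nat.cast_lt]
    rw [h1, ← Finset.coe_Iio, Set.encard_coe_eq_coe_finsetCard, Nat.card_Iio]

open scoped Classical in
noncomputable def mkSeq {X : Type*} (a : X) (l : List X) (m : List ℕ∞) : ℕ → X :=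
  fun n => if n.unpair.1 < l.length ∧ (n.unpair.2 : ℕ∞) < m.getD n.unpair.1 0
    then l.getD n.unpair.1 a else a

lemma getD_map_range' {k i : ℕ} (f : ℕ → ℕ∞) (h : i < k) :
    (((List.range k).map f).getD i 0) = f i := by
  rw [List.getD_eq_getElem _ _ (by simpa using h)]
  simp

lemma list_le_foldr_max' (l : List ℝ) (x : ℝ) (hx : x ∈ l) : x ≤ l.foldr max 0 := by
  induction l with
  | nil => simp at hx
  | cons y ys ih =>
    rcases List.mem_cons.1 hx with rfl | hx'
    · exact le_max_left _ _
    · exact (ih hx').trans (le_max_right _ _)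

noncomputable def padEquiv' (s : Set ℕ) : (↥s ⊕ ℕ) ≃ ℕ := by
  have : Infinite (↥s ⊕ ℕ) := Sum.infinite_of_right
  letI := (nonempty_denumerable (↥s ⊕ ℕ)).some
  exact Denumerable.eqv _

variable {X : Type*} [MetricSpace X] {A : Set X}

theorem bdist_le_of_matching (hA : A.Nonempty) (f g : ℕ → X) (r : ℝ≥0∞)
    (L R : Set ℕ) (φ : ↥L ≃ ↥R)
    (hmatch : ∀ n : ↥L, edist (f n.1) (g (φ n).1) ≤ r)
    (hfL : ∀ n ∉ L, ∃ a ∈ A, edist (f n) a ≤ r)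
    (hgR : ∀ m ∉ R, ∃ a ∈ A, edist (g m) a ≤ r) :
    bdist A f g ≤ r := by
  classical
  set Lc := {n | n ∉ L} with hLc
  set Rc := {n | n ∉ R} with hRc
  set e1 : (↥Lc ⊕ ℕ) ≃ ℕ := padEquiv' Lc with he1
  set e2 : (↥Rc ⊕ ℕ) ≃ ℕ := padEquiv' Rc with he2
  set ψ : (↥Lc ⊕ ℕ) ≃ (↥Rc ⊕ ℕ) :=
    ((Equiv.sumCongr (Equiv.refl _) e2.symm).trans
      (((Equiv.sumAssoc _ _ _).symm.trans
        ((Equiv.sumCongr (Equiv.sumComm _ _) (Equiv.refl ℕ)).trans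
          (Equiv.sumAssoc _ _ _))).trans
        (Equiv.sumCongr (Equiv.refl _) e1))) with hψ
  have hψinl : ∀ x : ↥Lc, ψ (Sum.inl x) = Sum.inr (e1 (Sum.inl x)) := fun x => rfl
  set eL : (ℕ ⊕ ℕ) ≃ (↥L ⊕ (↥Lc ⊕ ℕ)) :=
    (Equiv.sumCongr (Equiv.sumCompl (· ∈ L)).symm (Equiv.refl ℕ)).trans
      (Equiv.sumAssoc _ _ _) with heL
  set eR : (ℕ ⊕ ℕ) ≃ (↥R ⊕ (↥Rc ⊕ ℕ)) :=
    (Equiv.sumCongr (Equiv.sumCompl (· ∈ R)).symm (Equiv.refl ℕ)).trans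
      (Equiv.sumAssoc _ _ _) with heR
  set e : (ℕ ⊕ ℕ) ≃ (ℕ ⊕ ℕ) := eL.trans ((Equiv.sumCongr φ ψ).trans eR.symm) with he
  have heRsymm_inl : ∀ y : ↥R, eR.symm (Sum.inl y) = Sum.inl y.1 := fun y => rfl
  have heRsymm_inr : ∀ z : ↥Rc ⊕ ℕ, eR.symm (Sum.inr z) =
      Sum.elim (fun x : ↥Rc => Sum.inl x.1) (fun j => Sum.inr j) z := by
    rintro (x | j) <;> rfl
  have heLinl : ∀ (n : ℕ) (h : n ∈ L), eL (Sum.inl n) = Sum.inl ⟨n, h⟩ := by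
    intro n h
    rw [heL]
    simp only [Equiv.trans_apply, Equiv.sumCongr_apply, Sum.map_inl,
      Equiv.sumCompl_symm_apply_of_pos h]
    rfl
  have heLinr : ∀ (n : ℕ) (h : n ∉ L), eL (Sum.inl n) = Sum.inr (Sum.inl ⟨n, h⟩) := by
    intro n h
    rw [heL]
    simp only [Equiv.trans_apply, Equiv.sumCongr_apply, Sum.map_inl,
      Equiv.sumCompl_symm_apply_of_neg h]
    rfl
  have hP1 : ∀ (n : ℕ) (h : n ∈ L), e (Sum.inl n) = Sum.inl (φ ⟨n, h⟩).1 := by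
    intro n h
    rw [he]
    simp only [Equiv.trans_apply, heLinl n h, Equiv.sumCongr_apply, Sum.map_inl]
    exact heRsymm_inl _
  have hP2 : ∀ (n : ℕ) (h : n ∉ L), e (Sum.inl n) = Sum.inr (e1 (Sum.inl ⟨n, h⟩)) := by
    intro n h
    rw [he]
    simp only [Equiv.trans_apply, heLinr n h, Equiv.sumCongr_apply, Sum.map_inr]
    rw [hψinl]
    rw [heRsymm_inr]
    rfl
  set nF : ℕ → X := fun n => if h : ∃ a ∈ A, edist (f n) a ≤ r then h.choose else hA.some
    with hnF
  set nG : ℕ → X := fun m => if h : ∃ a ∈ A, edist (g m) a ≤ r then h.choose else hA.some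
    with hnG
  have hnF1 : ∀ n, nF n ∈ A := by
    intro n; rw [hnF]; dsimp only
    split_ifs with h
    · exact h.choose_spec.1
    · exact hA.some_mem
  have hnF2 : ∀ n ∉ L, edist (f n) (nF n) ≤ r := by
    intro n hn; rw [hnF]; dsimp only
    rw [dif_pos (hfL n hn)]
    exact (hfL n hn).choose_spec.2
  have hnG1 : ∀ m, nG m ∈ A := by
    intro m; rw [hnG]; dsimp only
    split_ifs with h
    · exact h.choose_spec.1
    · exact hA.some_mem
  have hnG2 : ∀ m ∉ R, edist (g m) (nG m) ≤ r := by
    intro m hm; rw [hnG]; dsimp only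
    rw [dif_pos (hgR m hm)]
    exact (hgR m hm).choose_spec.2
  set α : ℕ → X := fun n => Sum.elim nG (fun _ => hA.some) (e (Sum.inr n)) with hα
  set β : ℕ → X := fun m => Sum.elim nF (fun _ => hA.some) (e.symm (Sum.inr m)) with hβ
  have hαA : ∀ n, α n ∈ A := by
    intro n; rw [hα]; dsimp only
    rcases e (Sum.inr n) with m | m
    · exact hnG1 m
    · exact hA.some_mem
  have hβA : ∀ m, β m ∈ A := by
    intro m; rw [hβ]; dsimp only
    rcases e.symm (Sum.inr m) with n | n
    · exact hnF1 n
    · exact hA.some_mem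
  have hle : bdist A f g ≤ ⨆ n : ℕ ⊕ ℕ, edist (Sum.elim f α n) (Sum.elim g β (e n)) := by
    rw [bdist]
    exact iInf_le_of_le α (iInf_le_of_le hαA (iInf_le_of_le β (iInf_le_of_le hβA
      (iInf_le _ e))))
  refine hle.trans (iSup_le ?_)
  rintro (n | n)
  · by_cases hn : n ∈ L
    · rw [hP1 n hn]
      exact hmatch ⟨n, hn⟩
    · rw [hP2 n hn]
      have hsymm : e.symm (Sum.inr (e1 (Sum.inl ⟨n, hn⟩))) = Sum.inl n := by
        rw [Equiv.symm_apply_eq]; exact (hP2 n hn).symm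
      show edist (f n) (β _) ≤ r
      rw [hβ]; dsimp only
      rw [hsymm]
      exact hnF2 n hn
  · rcases hcase : e (Sum.inr n) with m | m
    · show edist (α n) (g m) ≤ r
      have hm : m ∉ R := by
        intro hm
        have h1 := hP1 (φ.symm ⟨m, hm⟩).1 (φ.symm ⟨m, hm⟩).2
        simp only [Subtype.coe_eta, Equiv.apply_symm_apply] at h1
        have h2 := e.injective (hcase.trans h1.symm)
        exact absurd h2 (by simp)
      have : α n = nG m := by rw [hα]; dsimp only; rw [hcase]; rfl
      rw [this, edist_comm]
      exact hnG2 m hm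
    · have hsymm : e.symm (Sum.inr m) = Sum.inr n := by
        rw [Equiv.symm_apply_eq]; exact hcase.symm
      have h1 : α n = hA.some := by rw [hα]; dsimp only; rw [hcase]; rfl
      have h2 : β m = hA.some := by rw [hβ]; dsimp only; rw [hsymm]; rfl
      show edist (α n) (β m) ≤ r
      rw [h1, h2]
      simp

theorem infDist_bound_of_isDiagram (hA : A.Nonempty) {f : ℕ → X} (hf : IsDiagram A f) :
    ∃ C : ℝ, ∀ n, Metric.infDist (f n) A ≤ C := by
  obtain ⟨g, hgA, hne⟩ := hf
  have hlt : bdist A f g < ⊤ := hne.lt_top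
  rw [bdist] at hlt
  obtain ⟨α, hlt⟩ := iInf_lt_iff.1 hlt
  obtain ⟨hαA, hlt⟩ := iInf_lt_iff.1 hlt
  obtain ⟨β, hlt⟩ := iInf_lt_iff.1 hlt
  obtain ⟨hβA, hlt⟩ := iInf_lt_iff.1 hlt
  obtain ⟨e, hlt⟩ := iInf_lt_iff.1 hlt
  refine ⟨(⨆ n : ℕ ⊕ ℕ, edist (Sum.elim f α n) (Sum.elim g β (e n))).toReal, fun n => ?_⟩
  set y := Sum.elim g β (e (Sum.inl n)) with hy
  have hyA : y ∈ A := by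
    rw [hy]
    rcases e (Sum.inl n) with m | m
    · exact hgA m
    · exact hβA m
  have h1 : edist (f n) y ≤ ⨆ n : ℕ ⊕ ℕ, edist (Sum.elim f α n) (Sum.elim g β (e n)) :=
    le_iSup (fun n : ℕ ⊕ ℕ => edist (Sum.elim f α n) (Sum.elim g β (e n))) (Sum.inl n)
  calc Metric.infDist (f n) A ≤ dist (f n) y := Metric.infDist_le_dist_of_mem hyA
    _ = (edist (f n) y).toReal := by rw [dist_edist]
    _ ≤ _ := ENNReal.toReal_mono hlt.ne h1

end Aux

/-- If for all `D > δ > 0` the set `B_D(A) \ B_δ(A)` is totally bounded, then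
`D_∞(X, A)` is separable: it contains a countable dense subset. -/
theorem stmt_9 {X : Type*} [MetricSpace X] (A : Set X) (hA : A.Nonempty)
    (hAcl : IsClosed A)
    (htb : ∀ D δ : ℝ, 0 < δ → δ < D →
      TotallyBounded {x : X | δ ≤ Metric.infDist x A ∧ Metric.infDist x A < D}) :
    ∃ S : Set (ℕ → X), S.Countable ∧ (∀ f ∈ S, IsDiagram A f) ∧
      ∀ f : ℕ → X, IsDiagram A f → ∀ ε : ℝ≥0∞, 0 < ε → ∃ g ∈ S, bdist A f g < ε := by
  classical
  have hnet0 : ∀ q D : ℚ, ∃ t : Finset X, 0 < q → q < D →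
      ∀ x : X, (q : ℝ) ≤ Metric.infDist x A → Metric.infDist x A < D →
        ∃ y ∈ t, dist x y < q := by
    intro q D
    by_cases h : 0 < q ∧ q < D
    · have h2 := htb D q (by exact_mod_cast h.1) (by exact_mod_cast h.2)
      rw [totallyBounded_iff] at h2
      obtain ⟨t, htf, hcov⟩ := h2 (q : ℝ) (by exact_mod_cast h.1)
      refine ⟨htf.toFinset, fun _ _ x hx1 hx2 => ?_⟩
      have hx : x ∈ ⋃ y ∈ t, ball y (q : ℝ) := hcov ⟨hx1, hx2⟩
      simp only [mem_iUnion, exists_prop] at hx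
      obtain ⟨y, hyt, hxy⟩ := hx
      exact ⟨y, htf.mem_toFinset.2 hyt, mem_ball.1 hxy⟩
    · exact ⟨∅, fun h1 h2 => absurd ⟨h1, h2⟩ h⟩
  choose net hnet using hnet0
  refine ⟨Set.range (fun p : ℚ × ℚ × List ℕ∞ => mkSeq hA.some (net p.1 p.2.1).toList p.2.2),
    Set.countable_range _, ?_, ?_⟩
  · -- every element of S is a diagram
    rintro f ⟨⟨q, D, m⟩, rfl⟩
    dsimp only
    set l := (net q D).toList with hl
    refine ⟨fun _ => hA.some, fun _ => hA.some_mem, ?_⟩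
    set r : ℝ≥0∞ :=
      ENNReal.ofReal ((l.map (fun y => Metric.infDist y A)).foldr max 0 + 1) with hr
    have hb : bdist A (mkSeq hA.some l m) (fun _ => hA.some) ≤ r := by
      refine bdist_le_of_matching hA _ _ r ∅ ∅ (Equiv.refl _) ?_ ?_ ?_
      · rintro ⟨n, hn⟩
        exact absurd hn (by simp)
      · intro n _
        have hval : mkSeq hA.some l m n = hA.some ∨ mkSeq hA.some l m n ∈ l := by
          unfold mkSeq
          split_ifs with h
          · right
            rw [List.getD_eq_getElem _ _ h.1]
            exact List.getElem_mem _
          · left; rfl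
        rcases hval with hv | hv
        · exact ⟨hA.some, hA.some_mem, by rw [hv]; simp⟩
        · set x := mkSeq hA.some l m n
          have h1 : Metric.infDist x A ≤ (l.map (fun y => Metric.infDist y A)).foldr max 0 :=
            list_le_foldr_max' _ _ (List.mem_map_of_mem hv)
          have h2 : Metric.infDist x A <
              (l.map (fun y => Metric.infDist y A)).foldr max 0 + 1 := by linarith
          obtain ⟨a', ha'A, ha'⟩ := (Metric.infDist_lt_iff hA).1 h2
          refine ⟨a', ha'A, ?_⟩
          rw [edist_dist, hr]
          exact ENNReal.ofReal_le_ofReal ha'.le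
      · intro m' _
        exact ⟨hA.some, hA.some_mem, by simp⟩
    exact ne_top_of_le_ne_top ENNReal.ofReal_ne_top hb
  · -- density
    intro f hf ε hε
    obtain ⟨C, hC⟩ := infDist_bound_of_isDiagram hA hf
    obtain ⟨q, hq0, hqε⟩ : ∃ q : ℚ, 0 < q ∧ ENNReal.ofReal q < ε := by
      rcases eq_or_ne ε ⊤ with rfl | hne
      · exact ⟨1, one_pos, ENNReal.ofReal_lt_top⟩
      · have h1 : 0 < ε.toReal := ENNReal.toReal_pos hε.ne' hne
        obtain ⟨q, hq1, hq2⟩ := exists_rat_btwn h1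
        refine ⟨q, by exact_mod_cast hq1, ?_⟩
        rw [← ENNReal.ofReal_toReal hne]
        exact (ENNReal.ofReal_lt_ofReal_iff h1).2 hq2
    obtain ⟨D, hD⟩ := exists_rat_gt (max C (q : ℝ))
    have hqD : q < D := by
      have : (q : ℝ) < D := (le_max_right C (q : ℝ)).trans_lt hD
      exact_mod_cast this
    set l := (net q D).toList with hl
    set k := l.length with hk
    have hcov := hnet q D hq0 hqD
    have hidx0 : ∀ n : ℕ, ∃ i : ℕ, (q : ℝ) ≤ Metric.infDist (f n) A →
        i < k ∧ dist (f n) (l.getD i hA.some) < q := by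
      intro n
      by_cases hn : (q : ℝ) ≤ Metric.infDist (f n) A
      · obtain ⟨y, hyt, hy⟩ := hcov (f n) hn
          ((hC n).trans_lt ((le_max_left C (q : ℝ)).trans_lt hD))
        have hyl : y ∈ l := by rw [hl]; exact Finset.mem_toList.2 hyt
        obtain ⟨i, hi, hil⟩ := List.mem_iff_getElem.1 hyl
        exact ⟨i, fun _ => ⟨hi, by rw [List.getD_eq_getElem _ _ hi, hil]; exact hy⟩⟩
      · exact ⟨0, fun h => absurd h hn⟩
    choose idx hidx using hidx0
    set L : Set ℕ := {n | (q : ℝ) ≤ Metric.infDist (f n) A} with hLdef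
    set I : ℕ → Set ℕ := fun i => {n | n ∈ L ∧ idx n = i} with hIdef
    set m : List ℕ∞ := (List.range k).map (fun i => (I i).encard) with hmdef
    set R : Set ℕ := {n : ℕ | n.unpair.1 < k ∧ (n.unpair.2 : ℕ∞) < m.getD n.unpair.1 0}
      with hRdef
    have hmget : ∀ i, i < k → m.getD i 0 = (I i).encard := by
      intro i hi
      rw [hmdef]
      exact getD_map_range' _ hi
    -- fiber equivs
    have hfib : ∀ i : ℕ, i < k →
        Nonempty (↥(I i) ≃ ↥{j : ℕ | (j : ℕ∞) < m.getD i 0}) := by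
      intro i hi
      apply equiv_of_encard_eq'
      rw [hmget i hi, encard_cast_lt']
    have hψ := fun (i : Fin k) => (hfib i.1 i.2).some
    -- L ≃ Σ i, I i
    have hGbij : Function.Bijective
        (fun p : Σ i : Fin k, ↥(I i.1) => (⟨p.2.1, p.2.2.1⟩ : ↥L)) := by
      constructor
      · rintro ⟨⟨i, hi⟩, n, hn⟩ ⟨⟨i2, hi2⟩, n2, hn2⟩ hpq
        have hval : n = n2 := congrArg Subtype.val hpq
        subst hval
        have hii : i = i2 := hn.2.symm.trans hn2.2
        subst hii
        rfl
      · rintro ⟨n, hn⟩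
        exact ⟨⟨⟨idx n, (hidx n hn).1⟩, ⟨n, hn, rfl⟩⟩, rfl⟩
    set EL := Equiv.ofBijective _ hGbij with hEL
    -- R ≃ Σ i, {j | j < m_i}
    have hHmem : ∀ p : Σ i : Fin k, ↥{j : ℕ | (j : ℕ∞) < m.getD i.1 0},
        Nat.pair p.1.1 p.2.1 ∈ R := by
      rintro ⟨⟨i, hi⟩, j, hj⟩
      constructor
      · rw [Nat.unpair_pair]; exact hi
      · rw [Nat.unpair_pair]; exact hj
    have hHbij : Function.Bijective
        (fun p : Σ i : Fin k, ↥{j : ℕ | (j : ℕ∞) < m.getD i.1 0} =>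
          (⟨Nat.pair p.1.1 p.2.1, hHmem p⟩ : ↥R)) := by
      constructor
      · rintro ⟨⟨i, hi⟩, j, hj⟩ ⟨⟨i2, hi2⟩, j2, hj2⟩ hpq
        have hval : Nat.pair i j = Nat.pair i2 j2 := congrArg Subtype.val hpq
        have h2 : (i, j) = (i2, j2) := by
          rw [← Nat.unpair_pair i j, ← Nat.unpair_pair i2 j2, hval]
        have hii : i = i2 := congrArg Prod.fst h2
        subst hii
        have hjj : j = j2 := congrArg Prod.snd h2
        subst hjj
        rfl
      · rintro ⟨n, hn⟩
        exact ⟨⟨⟨n.unpair.1, hn.1⟩, ⟨n.unpair.2, hn.2⟩⟩, Subtype.ext (Nat.pair_unpair n)⟩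
    set ER := Equiv.ofBijective _ hHbij with hER
    set φ : ↥L ≃ ↥R := EL.symm.trans ((Equiv.sigmaCongrRight hψ).trans ER) with hφdef
    -- key property of φ
    have hφval : ∀ n : ↥L, ((φ n : ℕ)).unpair.1 = idx n.1 := by
      intro n
      have hELs : EL.symm n = ⟨⟨idx n.1, (hidx n.1 n.2).1⟩, ⟨n.1, n.2, rfl⟩⟩ := by
        rw [Equiv.symm_apply_eq]
        exact Subtype.ext rfl
      rw [hφdef]
      simp only [Equiv.trans_apply, hELs]
      show (Nat.pair (idx n.1) _).unpair.1 = idx n.1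
      rw [Nat.unpair_pair]
    -- conclude
    set g := mkSeq hA.some l m with hgdef
    have hgR : ∀ n : ℕ, n ∈ R → g n = l.getD n.unpair.1 hA.some := by
      intro n hn
      rw [hgdef]
      unfold mkSeq
      have hn2 : (Nat.unpair n).1 < l.length ∧
          ((Nat.unpair n).2 : ℕ∞) < m.getD (Nat.unpair n).1 0 := hn
      exact if_pos hn2
    have hgnR : ∀ n : ℕ, n ∉ R → g n = hA.some := by
      intro n hn
      rw [hgdef]
      unfold mkSeq
      exact if_neg (fun hc => hn hc)
    refine ⟨g, ⟨(q, D, m), rfl⟩, ?_⟩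
    have hb : bdist A f g ≤ ENNReal.ofReal q := by
      refine bdist_le_of_matching hA f g _ L R φ ?_ ?_ ?_
      · intro n
        have h1 : g (φ n).1 = l.getD ((φ n : ℕ)).unpair.1 hA.some := hgR _ (φ n).2
        rw [h1, hφval n]
        rw [edist_dist]
        exact ENNReal.ofReal_le_ofReal (hidx n.1 n.2).2.le
      · intro n hn
        have h1 : Metric.infDist (f n) A < q := lt_of_not_ge hn
        obtain ⟨a', ha'A, ha'⟩ := (Metric.infDist_lt_iff hA).1 h1
        refine ⟨a', ha'A, ?_⟩
        rw [edist_dist]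
        exact ENNReal.ofReal_le_ofReal ha'.le
      · intro m' hm'
        exact ⟨hA.some, hA.some_mem, by rw [hgnR _ hm']; simp⟩
    exact hb.trans_lt hqε
end
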